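/- Let T be the vector space spanned by rooted trees with vertices decorated by a set V and edges decorated by a set E, and for a ∈ E let σ ▷ᵃ τ := Σ_{v ∈ N_τ} σ ▷ᵃ_v τ be the sum of graftings of σ onto each vertex v of τ by a new edge decorated a. Then (T, (▷ᵃ)_{a∈E}) is an E-multi-pre-Lie algebra. -/

import Mathlib

/-- Planar rooted trees with vertex decorations in `V` and edge decorations in `E`. -/
inductive RT (V E : Type) : Type where
  | node : V → List (E × RT V E) → RT V E

/-- One-step reordering of children (at the root or at a deeper vertex). -/
inductive Swap {V E : Type} : RT V E → RT V E → Prop where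
  | here (v : V) (l₁ l₂ : List (E × RT V E)) (p q : E × RT V E) :
      Swap (.node v (l₁ ++ p :: q :: l₂)) (.node v (l₁ ++ q :: p :: l₂))
  | child (v : V) (l₁ l₂ : List (E × RT V E)) (e : E) {t t' : RT V E} :
      Swap t t' → Swap (.node v (l₁ ++ (e, t) :: l₂)) (.node v (l₁ ++ (e, t') :: l₂))

/-- (Non-planar) decorated rooted trees: planar trees modulo reordering of children. -/
def QT (V E : Type) : Type := Quot (@Swap V E)

/-- The linear span of decorated rooted trees, with rational coefficients. -/
abbrev Span (V E : Type) : Type := QT V E →₀ ℚ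

def qt {V E : Type} (t : RT V E) : QT V E := Quot.mk _ t

/-- A tree, as a basis vector of the span. -/
noncomputable def bas {V E : Type} (t : RT V E) : Span V E := Finsupp.single (qt t) 1

/-- The element of the span given by a list of trees (sum with multiplicity). -/
noncomputable def ofList {V E : Type} (l : List (RT V E)) : Span V E := (l.map bas).sum

/-- Formal rational combination of planar trees, as an element of the span. -/
noncomputable def combo {V E : Type} (l : List (ℚ × RT V E)) : Span V E :=
  (l.map fun p => p.1 • bas p.2).sum

mutual
/-- List of the graftings of `σ` on each vertex of a tree, via a new `a`-edge. -/
def graftT {V E : Type} (a : E) (σ : RT V E) : RT V E → List (RT V E)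
  | .node v l => .node v ((a, σ) :: l) :: (graftL a σ l).map (.node v)
/-- Auxiliary: graftings of `σ` inside one of the listed subtrees. -/
def graftL {V E : Type} (a : E) (σ : RT V E) :
    List (E × RT V E) → List (List (E × RT V E))
  | [] => []
  | (e, t) :: r =>
      ((graftT a σ t).map fun t' => (e, t') :: r)
        ++ ((graftL a σ r).map fun r' => (e, t) :: r')
end

/- ## Auxiliary lemmas -/

theorem ofList_nil {V E : Type} : ofList ([] : List (RT V E)) = 0 := rfl

theorem ofList_cons {V E : Type} (t : RT V E) (L : List (RT V E)) :
    ofList (t :: L) = bas t + ofList L := by simp [ofList]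

theorem ofList_append {V E : Type} (L₁ L₂ : List (RT V E)) :
    ofList (L₁ ++ L₂) = ofList L₁ + ofList L₂ := by simp [ofList]

theorem ofList_flatMap_nil {V E : Type} {α : Type} (L : List α) :
    ofList (L.flatMap fun _ => ([] : List (RT V E))) = 0 := by
  induction L with
  | nil => rfl
  | cons x L ih => simpa [List.flatMap_cons] using ih

theorem ofList_flatMap_cons {V E : Type} {α : Type} (L : List α) (f : α → RT V E)
    (g : α → List (RT V E)) :
    ofList (L.flatMap fun x => f x :: g x) = ofList (L.map f) + ofList (L.flatMap g) := by
  induction L with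
  | nil => simp [ofList_nil]
  | cons x L ih =>
      simp only [List.flatMap_cons, List.map_cons, ofList_cons, ofList_append, ih]
      abel

theorem ofList_flatMap_append {V E : Type} {α : Type} (L : List α)
    (f g : α → List (RT V E)) :
    ofList (L.flatMap fun x => f x ++ g x)
      = ofList (L.flatMap f) + ofList (L.flatMap g) := by
  induction L with
  | nil => simp [ofList_nil]
  | cons x L ih =>
      simp only [List.flatMap_cons, ofList_append, ih]
      abel

theorem ofList_comm {V E : Type} {α β : Type} (L₁ : List α) (L₂ : List β)
    (f : α → β → RT V E) :
    ofList (L₁.flatMap fun x => L₂.map (f x))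
      = ofList (L₂.flatMap fun y => L₁.map fun x => f x y) := by
  induction L₁ with
  | nil => simp [ofList_nil, ofList_flatMap_nil]
  | cons x L ih =>
      rw [List.flatMap_cons, ofList_append, ih,
        show (L₂.flatMap fun y => (x :: L).map fun x' => f x' y)
            = L₂.flatMap fun y => f x y :: (L.map fun x' => f x' y) from rfl,
        ofList_flatMap_cons]

theorem ofList_mapDomain {V E : Type} (C : RT V E → RT V E)
    (hC : ∀ (a b : RT V E), Swap a b → Swap (C a) (C b)) (L : List (RT V E)) :
    Finsupp.mapDomain (α := QT V E) (β := QT V E) (M := ℚ) (Quot.map C hC) (ofList L) = ofList (L.map C) := by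
  induction L with
  | nil => exact Finsupp.mapDomain_zero
  | cons t L ih =>
      rw [List.map_cons, ofList_cons, ofList_cons, ← ih]
      exact Finsupp.mapDomain_add.trans
        (congrArg (· + _) (Finsupp.mapDomain_single (f := Quot.map C hC) (a := qt t) (b := (1 : ℚ))))

theorem ofList_map_node {V E : Type} (v : V) (pre r : List (E × RT V E)) (e : E)
    {L M L' M' : List (RT V E)}
    (h : ofList L + ofList M = ofList L' + ofList M') :
    ofList (L.map fun t => RT.node v (pre ++ (e, t) :: r))
      + ofList (M.map fun t => RT.node v (pre ++ (e, t) :: r))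
    = ofList (L'.map fun t => RT.node v (pre ++ (e, t) :: r))
      + ofList (M'.map fun t => RT.node v (pre ++ (e, t) :: r)) := by
  have hC : ∀ (a b : RT V E), Swap a b →
      Swap (RT.node v (pre ++ (e, a) :: r)) (RT.node v (pre ++ (e, b) :: r)) :=
    fun a b hs => Swap.child v pre r e hs
  have := congrArg (Finsupp.mapDomain (α := QT V E) (β := QT V E) (M := ℚ) (Quot.map _ hC)) h
  rw [← ofList_mapDomain _ hC L, ← ofList_mapDomain _ hC M, ← ofList_mapDomain _ hC L',
    ← ofList_mapDomain _ hC M']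
  exact Finsupp.mapDomain_add.symm.trans (this.trans Finsupp.mapDomain_add)

theorem bas_swap {V E : Type} {t t' : RT V E} (h : Swap t t') : bas t = bas t' := by
  unfold bas qt
  rw [Quot.sound h]

mutual
theorem keyT {V E : Type} (a b : E) (σ ρ τ : RT V E) :
    ofList ((graftT b ρ τ).flatMap (graftT a σ))
      + ofList ((graftT b ρ σ).flatMap fun σ' => graftT a σ' τ)
    = ofList ((graftT a σ τ).flatMap (graftT b ρ))
      + ofList ((graftT a σ ρ).flatMap fun ρ' => graftT b ρ' τ) := by
  match τ with
  | .node v l =>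
    have hL := keyL a b σ ρ v [] l
    simp only [List.nil_append, List.map_flatMap] at hL
    have h0 : bas (RT.node v ((a, σ) :: (b, ρ) :: l)) = bas (RT.node v ((b, ρ) :: (a, σ) :: l)) :=
      bas_swap (Swap.here v [] l (a, σ) (b, ρ))
    simp only [graftT, graftL, List.flatMap_cons, List.flatMap_append, List.flatMap_map,
      List.map_flatMap, List.map_append, List.map_cons, List.map_map, Function.comp_def,
      ofList_cons, ofList_append, ofList_flatMap_cons, ofList_flatMap_append]
    linear_combination (norm := abel) h0 + hL
termination_by sizeOf τ

theorem keyL {V E : Type} (a b : E) (σ ρ : RT V E) (v : V) (pre l : List (E × RT V E)) :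
    ofList ((((graftL b ρ l).flatMap (graftL a σ)).map fun l' => RT.node v (pre ++ l')))
      + ofList (((graftT b ρ σ).flatMap fun σ' => graftL a σ' l).map
          fun l' => RT.node v (pre ++ l'))
    = ofList ((((graftL a σ l).flatMap (graftL b ρ)).map fun l' => RT.node v (pre ++ l')))
      + ofList (((graftT a σ ρ).flatMap fun ρ' => graftL b ρ' l).map
          fun l' => RT.node v (pre ++ l')) := by
  match l with
  | [] =>
      simp [graftL, ofList_nil, ofList_flatMap_nil, List.map_flatMap]
  | (e, t) :: r =>
      have hT := ofList_map_node v pre r e (keyT a b σ ρ t)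
      simp only [List.map_flatMap] at hT
      have hR := keyL a b σ ρ v (pre ++ [(e, t)]) r
      simp only [List.append_assoc, List.singleton_append, List.map_flatMap] at hR
      have hc1 := ofList_comm (graftT b ρ t) (graftL a σ r)
        (fun t' r' => RT.node v (pre ++ (e, t') :: r'))
      have hc2 := ofList_comm (graftT a σ t) (graftL b ρ r)
        (fun t' r' => RT.node v (pre ++ (e, t') :: r'))
      simp only [graftL, List.flatMap_cons, List.flatMap_append, List.flatMap_map,
        List.map_flatMap, List.map_append, List.map_cons, List.map_map, Function.comp_def,
        ofList_append, ofList_flatMap_append]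
      linear_combination (norm := abel) hT + hR + hc1 - hc2
termination_by sizeOf l
end

/-- **Grafting is multi-pre-Lie.** -/
theorem grafting_multiPreLie {V E : Type}
    (g : E → Span V E →ₗ[ℚ] Span V E →ₗ[ℚ] Span V E)
    (hg : ∀ (a : E) (σ τ : RT V E), g a (bas σ) (bas τ) = ofList (graftT a σ τ)) :
    ∀ (a b : E) (x y z : Span V E),
      g a x (g b y z) - g b (g a x y) z = g b y (g a x z) - g a (g b y x) z := by
  have hofr : ∀ (c : E) (σ : RT V E) (L : List (RT V E)),
      g c (bas σ) (ofList L) = ofList (L.flatMap (graftT c σ)) := by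
    intro c σ L
    induction L with
    | nil => simp [ofList_nil]
    | cons t L ih =>
        rw [ofList_cons, map_add, hg, ih, List.flatMap_cons, ofList_append]
  have hofl : ∀ (c : E) (L : List (RT V E)) (τ : RT V E),
      g c (ofList L) (bas τ) = ofList (L.flatMap fun s => graftT c s τ) := by
    intro c L τ
    induction L with
    | nil => simp [ofList_nil]
    | cons t L ih =>
        rw [ofList_cons, map_add, LinearMap.add_apply, hg, ih, List.flatMap_cons, ofList_append]
  have core : ∀ (a b : E) (σ ρ τ : RT V E),
      g a (bas σ) (g b (bas ρ) (bas τ)) - g b (g a (bas σ) (bas ρ)) (bas τ)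
        = g b (bas ρ) (g a (bas σ) (bas τ)) - g a (g b (bas ρ) (bas σ)) (bas τ) := by
    intro a b σ ρ τ
    rw [hg b ρ τ, hofr a σ, hg a σ ρ, hofl b _ τ, hg a σ τ, hofr b ρ, hg b ρ σ, hofl a _ τ,
      sub_eq_sub_iff_add_eq_add]
    exact keyT a b σ ρ τ
  have ext1 : ∀ (a b : E) (σ ρ : RT V E) (z : Span V E),
      g a (bas σ) (g b (bas ρ) z) - g b (g a (bas σ) (bas ρ)) z
        = g b (bas ρ) (g a (bas σ) z) - g a (g b (bas ρ) (bas σ)) z := by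
    intro a b σ ρ z
    induction z using Finsupp.induction_linear with
    | zero => simp
    | add p q hp hq =>
        simp only [map_add]
        linear_combination (norm := abel) hp + hq
    | single q c =>
        induction q using Quot.ind with
        | _ t =>
          rw [show (Finsupp.single (Quot.mk Swap t) c : Span V E) = c • bas t by
            exact (Finsupp.smul_single_one _ _).symm]
          simp only [map_smul, ← smul_sub]
          exact congrArg _ (core a b σ ρ t)
  have ext2 : ∀ (a b : E) (σ : RT V E) (y z : Span V E),
      g a (bas σ) (g b y z) - g b (g a (bas σ) y) z
        = g b y (g a (bas σ) z) - g a (g b y (bas σ)) z := by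
    intro a b σ y z
    induction y using Finsupp.induction_linear with
    | zero => simp
    | add p q hp hq =>
        simp only [map_add, LinearMap.add_apply]
        linear_combination (norm := abel) hp + hq
    | single q c =>
        induction q using Quot.ind with
        | _ t =>
          rw [show (Finsupp.single (Quot.mk Swap t) c : Span V E) = c • bas t by
            exact (Finsupp.smul_single_one _ _).symm]
          simp only [map_smul, LinearMap.smul_apply, ← smul_sub]
          exact congrArg _ (ext1 a b σ t z)
  intro a b x y z
  induction x using Finsupp.induction_linear with
  | zero => simp
  | add p q hp hq =>
      simp only [map_add, LinearMap.add_apply]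
      linear_combination (norm := abel) hp + hq
  | single q c =>
      induction q using Quot.ind with
      | _ t =>
        rw [show (Finsupp.single (Quot.mk Swap t) c : Span V E) = c • bas t by
          exact (Finsupp.smul_single_one _ _).symm]
        simp only [map_smul, LinearMap.smul_apply, ← smul_sub]
        exact congrArg _ (ext2 a b t y z)
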